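/- Let Z = (Z_g)_{g≥0} be a single DBPC started at 1 with survival probability π > 0, offspring weight p_{1,o} ≠ 1, and not both p_{0,o} = 1 and p_{1,c} = 1. Then for every sequence (b_N)_{N∈ℕ} with b_N → ∞: lim_{N→∞} P(∃ g ∈ ℕ₀: Z̄_g ≥ b_N) = lim_{N→∞} P(∃ g ∈ ℕ₀: Z_g ≥ b_N) = π, where Z̄_g = Σ_{i=0}^{g} Z_i is the total size up to generation g. -/

import Mathlib

open MeasureTheory ProbabilityTheory Filter

/-- A discrete-time branching process with cooperation (DBPC) with offspring
distribution `Lo`, cooperation distribution `Lc`, started at `k₀`. -/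
structure DBPC {Ω : Type*} [MeasurableSpace Ω] (P : Measure Ω)
    (Lo Lc : PMF ℕ) (k₀ : ℕ) where
  /-- offspring variables `X g i` -/
  X : ℕ → ℕ → Ω → ℕ
  /-- cooperation variables `Y g i j` -/
  Y : ℕ → ℕ → ℕ → Ω → ℕ
  /-- the process -/
  Z : ℕ → Ω → ℕ
  measX : ∀ g i, Measurable (X g i)
  measY : ∀ g i j, Measurable (Y g i j)
  measZ : ∀ g, Measurable (Z g)
  indep : iIndepFun
    (fun p : (ℕ × ℕ) ⊕ (ℕ × ℕ × ℕ) =>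
      Sum.elim (fun q : ℕ × ℕ => X q.1 q.2)
        (fun q : ℕ × ℕ × ℕ => Y q.1 q.2.1 q.2.2) p) P
  distX : ∀ g i, P.map (X g i) = Lo.toMeasure
  distY : ∀ g i j, P.map (Y g i j) = Lc.toMeasure
  init : ∀ᵐ ω ∂P, Z 0 ω = k₀
  step : ∀ g : ℕ, ∀ᵐ ω ∂P, Z (g + 1) ω =
    (∑ i ∈ Finset.Icc 1 (Z g ω), X (g + 1) i ω) +
      ∑ i ∈ Finset.Icc 1 (Z g ω), ∑ j ∈ Finset.Ico 1 i, Y (g + 1) i j ω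

/-- The mean of a probability distribution on `ℕ`. -/
noncomputable def pmfMean (L : PMF ℕ) : ℝ := ∑' j : ℕ, (j : ℝ) * (L j).toReal

/-- The variance of a probability distribution on `ℕ`. -/
noncomputable def pmfVar (L : PMF ℕ) : ℝ :=
  ∑' j : ℕ, ((j : ℝ) - pmfMean L) ^ 2 * (L j).toReal

set_option linter.unusedSectionVars false

namespace DBPCaux

/-- index type for the driving noise -/
abbrev Idx : Type := (ℕ × ℕ) ⊕ (ℕ × ℕ × ℕ)

/-- the generation of an index -/
def idxTime : Idx → ℕ := Sum.elim Prod.fst Prod.fst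

variable {Ω : Type*} [MeasurableSpace Ω] {P : Measure Ω} [IsProbabilityMeasure P]
  {Lo Lc : PMF ℕ} {k₀ : ℕ}

/-- the driving noise as a single family -/
def V (B : DBPC P Lo Lc k₀) : Idx → Ω → ℕ :=
  Sum.elim (fun q : ℕ × ℕ => B.X q.1 q.2)
    (fun q : ℕ × ℕ × ℕ => B.Y q.1 q.2.1 q.2.2)

lemma measV (B : DBPC P Lo Lc k₀) (a : Idx) : Measurable (V B a) := by
  rcases a with ⟨g, i⟩ | ⟨g, i, j⟩
  · exact B.measX g i
  · exact B.measY g i j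

lemma indepV (B : DBPC P Lo Lc k₀) :
    iIndep (fun a : Idx => MeasurableSpace.comap (V B a) ⊤) P :=
  (ProbabilityTheory.iIndepFun_iff_iIndep _ _ _).mp B.indep

/-- the canonical version of the process, defined pointwise by recursion -/
def W (B : DBPC P Lo Lc k₀) : ℕ → Ω → ℕ
  | 0 => fun _ => k₀
  | g + 1 => fun ω =>
      (∑ i ∈ Finset.Icc 1 (W B g ω), B.X (g + 1) i ω) +
        ∑ i ∈ Finset.Icc 1 (W B g ω), ∑ j ∈ Finset.Ico 1 i, B.Y (g + 1) i j ω

lemma W_ae (B : DBPC P Lo Lc k₀) : ∀ᵐ ω ∂P, ∀ g, B.Z g ω = W B g ω := by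
  filter_upwards [B.init, ae_all_iff.2 B.step] with ω h0 hs
  intro g
  induction g with
  | zero => exact h0
  | succ g ih => rw [hs g, ih]; rfl

/-- composition measurability helper for `ℕ`-valued maps -/
lemma meas_bind {m : MeasurableSpace Ω} {f : Ω → ℕ} {h : ℕ → Ω → ℕ}
    (hf : Measurable[m] f) (hh : ∀ n, Measurable[m] (h n)) :
    Measurable[m] (fun ω => h (f ω) ω) := by
  intro s hs
  have : (fun ω => h (f ω) ω) ⁻¹' s = ⋃ n, f ⁻¹' {n} ∩ h n ⁻¹' s := by
    ext ω
    simp only [Set.mem_preimage, Set.mem_iUnion, Set.mem_inter_iff, Set.mem_singleton_iff]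
    constructor
    · intro hx; exact ⟨f ω, rfl, hx⟩
    · rintro ⟨n, rfl, hx⟩; exact hx
  rw [this]
  exact MeasurableSet.iUnion fun n => (hf (measurableSet_singleton n)).inter (hh n hs)

/-- the σ-algebra of the noise up to generation `t` -/
def F (B : DBPC P Lo Lc k₀) (t : ℕ) : MeasurableSpace Ω :=
  ⨆ a ∈ {a : Idx | idxTime a ≤ t}, MeasurableSpace.comap (V B a) ⊤

lemma F_le (B : DBPC P Lo Lc k₀) (t : ℕ) : F B t ≤ ‹MeasurableSpace Ω› := by
  refine iSup₂_le fun a _ => ?_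
  exact (measV B a).comap_le

lemma F_mono (B : DBPC P Lo Lc k₀) {s t : ℕ} (hst : s ≤ t) : F B s ≤ F B t := by
  refine iSup₂_le fun a ha => ?_
  exact le_iSup₂ (f := fun (a : Idx) (_ : a ∈ {a : Idx | idxTime a ≤ t}) =>
    MeasurableSpace.comap (V B a) ⊤) a (le_trans ha hst)

lemma measV_F (B : DBPC P Lo Lc k₀) {t : ℕ} {a : Idx} (ha : idxTime a ≤ t) :
    Measurable[F B t] (V B a) :=
  (comap_measurable (V B a)).mono
    (le_iSup₂ (f := fun (a : Idx) (_ : a ∈ {a : Idx | idxTime a ≤ t}) =>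
      MeasurableSpace.comap (V B a) ⊤) a ha) le_rfl

lemma measX_F (B : DBPC P Lo Lc k₀) {t g i : ℕ} (hg : g ≤ t) :
    Measurable[F B t] (B.X g i) := measV_F B (a := Sum.inl (g, i)) hg

lemma measY_F (B : DBPC P Lo Lc k₀) {t g i j : ℕ} (hg : g ≤ t) :
    Measurable[F B t] (B.Y g i j) := measV_F B (a := Sum.inr (g, i, j)) hg

lemma measW_F (B : DBPC P Lo Lc k₀) : ∀ g, Measurable[F B g] (W B g) := by
  intro g
  induction g with
  | zero => exact @measurable_const _ _ _ (F B 0) _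
  | succ g ih =>
      have hW : Measurable[F B (g + 1)] (W B g) := ih.mono (F_mono B (Nat.le_succ g)) le_rfl
      have : W B (g + 1) = fun ω =>
          (fun n ω' => (∑ i ∈ Finset.Icc 1 n, B.X (g + 1) i ω') +
            ∑ i ∈ Finset.Icc 1 n, ∑ j ∈ Finset.Ico 1 i, B.Y (g + 1) i j ω') (W B g ω) ω := rfl
      rw [this]
      refine meas_bind (h := fun n ω' => (∑ i ∈ Finset.Icc 1 n, B.X (g + 1) i ω') +
          ∑ i ∈ Finset.Icc 1 n, ∑ j ∈ Finset.Ico 1 i, B.Y (g + 1) i j ω')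
        hW fun n => Measurable.add ?_ ?_
      · exact Finset.measurable_sum _ fun i _ => measX_F B le_rfl
      · exact Finset.measurable_sum _ fun i _ =>
          Finset.measurable_sum _ fun j _ => measY_F B le_rfl

lemma measW (B : DBPC P Lo Lc k₀) (g : ℕ) : Measurable (W B g) :=
  (measW_F B g).mono (F_le B g) le_rfl


/-- the σ-algebra of the noise strictly after generation `t` -/
def Fut (B : DBPC P Lo Lc k₀) (t : ℕ) : MeasurableSpace Ω :=
  ⨆ a ∈ {a : Idx | t < idxTime a}, MeasurableSpace.comap (V B a) ⊤

lemma measV_Fut (B : DBPC P Lo Lc k₀) {t : ℕ} {a : Idx} (ha : t < idxTime a) :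
    Measurable[Fut B t] (V B a) :=
  (comap_measurable (V B a)).mono
    (le_iSup₂ (f := fun (a : Idx) (_ : a ∈ {a : Idx | t < idxTime a}) =>
      MeasurableSpace.comap (V B a) ⊤) a ha) le_rfl

lemma indep_F_Fut (B : DBPC P Lo Lc k₀) (t : ℕ) : Indep (F B t) (Fut B t) P := by
  refine indep_iSup_of_disjoint (fun a => (measV B a).comap_le) (indepV B) ?_
  rw [Set.disjoint_left]
  intro a ha ha'
  simp only [Set.mem_setOf_eq] at ha ha'
  exact absurd ha' (not_lt.2 ha)

lemma indep_mul (B : DBPC P Lo Lc k₀) {t : ℕ} {A E : Set Ω}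
    (hA : MeasurableSet[F B t] A) (hE : MeasurableSet[Fut B t] E) :
    P (A ∩ E) = P A * P E :=
  (ProbabilityTheory.Indep_iff _ _ _).mp (indep_F_Fut B t) A E hA hE

/-- probability that a single offspring variable takes a given value -/
lemma probX (B : DBPC P Lo Lc k₀) (g i c : ℕ) : P (B.X g i ⁻¹' {c}) = Lo c := by
  rw [← Measure.map_apply (B.measX g i) (measurableSet_singleton c), B.distX g i,
    PMF.toMeasure_apply_singleton _ _ (measurableSet_singleton c)]

lemma probY (B : DBPC P Lo Lc k₀) (g i j c : ℕ) : P (B.Y g i j ⁻¹' {c}) = Lc c := by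
  rw [← Measure.map_apply (B.measY g i j) (measurableSet_singleton c), B.distY g i j,
    PMF.toMeasure_apply_singleton _ _ (measurableSet_singleton c)]

/-- product formula for finitely many noise variables -/
lemma probV_prod (B : DBPC P Lo Lc k₀) (s : Finset Idx) (c : Idx → ℕ) :
    P (⋂ a ∈ s, V B a ⁻¹' {c a}) = ∏ a ∈ s, P (V B a ⁻¹' {c a}) :=
  B.indep.measure_inter_preimage_eq_mul s (sets := fun a => {c a})
    (fun _ _ => measurableSet_singleton _)

/-- the elementary cylinder events are measurable in the future σ-algebra -/
lemma measSet_cyl_Fut (B : DBPC P Lo Lc k₀) {t : ℕ} (s : Finset Idx)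
    (hs : ∀ a ∈ s, t < idxTime a) (c : Idx → ℕ) :
    MeasurableSet[Fut B t] (⋂ a ∈ s, V B a ⁻¹' {c a}) := by
  refine MeasurableSet.biInter s.countable_toSet fun a ha => ?_
  exact measV_Fut B (hs a ha) (measurableSet_singleton (c a))


lemma W_succ (B : DBPC P Lo Lc k₀) (g : ℕ) (ω : Ω) :
    W B (g + 1) ω = (∑ i ∈ Finset.Icc 1 (W B g ω), B.X (g + 1) i ω) +
      ∑ i ∈ Finset.Icc 1 (W B g ω), ∑ j ∈ Finset.Ico 1 i, B.Y (g + 1) i j ω := rfl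

lemma W_zero_add (B : DBPC P Lo Lc k₀) {g : ℕ} {ω : Ω} (h : W B g ω = 0) :
    ∀ d, W B (g + d) ω = 0 := by
  intro d
  induction d with
  | zero => exact h
  | succ d ih =>
      have : g + (d + 1) = (g + d) + 1 := rfl
      rw [this, W_succ, ih]
      simp

lemma le_W_succ (B : DBPC P Lo Lc k₀) {g : ℕ} {ω : Ω}
    (hX : ∀ i, 0 < B.X (g + 1) i ω) : W B g ω ≤ W B (g + 1) ω := by
  have h1 : (Finset.Icc 1 (W B g ω)).card • 1 ≤ ∑ i ∈ Finset.Icc 1 (W B g ω), B.X (g + 1) i ω :=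
    Finset.card_nsmul_le_sum _ _ 1 fun i _ => hX i
  have h2 : (Finset.Icc 1 (W B g ω)).card = W B g ω := by
    rw [Nat.card_Icc]; omega
  rw [W_succ]
  simp only [h2, smul_eq_mul, mul_one] at h1
  omega

lemma sum_pred_ge : ∀ n : ℕ, 4 ≤ n → n + 2 ≤ ∑ i ∈ Finset.Icc 1 n, (i - 1) := by
  intro n hn
  induction n with
  | zero => omega
  | succ n ih =>
      rcases Nat.lt_or_ge n 4 with h | h
      · interval_cases n
        · omega
        · omega
        · omega
        · decide
      · have hs : ∑ i ∈ Finset.Icc 1 (n + 1), (i - 1)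
            = (∑ i ∈ Finset.Icc 1 n, (i - 1)) + n := by
          rw [Finset.sum_Icc_succ_top (by omega : 1 ≤ n + 1)]
          simp
        have := ih h
        omega

lemma W_growth_step (B : DBPC P Lo Lc k₀) {g : ℕ} {ω : Ω}
    (hY : ∀ i j, 0 < B.Y (g + 1) i j ω) (h4 : 4 ≤ W B g ω) :
    W B g ω + 2 ≤ W B (g + 1) ω := by
  set n := W B g ω with hn
  have hinner : ∀ i, i - 1 ≤ ∑ j ∈ Finset.Ico 1 i, B.Y (g + 1) i j ω := by
    intro i
    have h1 : (Finset.Ico 1 i).card • 1 ≤ ∑ j ∈ Finset.Ico 1 i, B.Y (g + 1) i j ω :=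
      Finset.card_nsmul_le_sum _ _ 1 fun j _ => hY i j
    have h2 : (Finset.Ico 1 i).card = i - 1 := by rw [Nat.card_Ico]
    simpa [h2] using h1
  have houter : ∑ i ∈ Finset.Icc 1 n, (i - 1)
      ≤ ∑ i ∈ Finset.Icc 1 n, ∑ j ∈ Finset.Ico 1 i, B.Y (g + 1) i j ω :=
    Finset.sum_le_sum fun i _ => hinner i
  have hG := sum_pred_ge n h4
  rw [W_succ, ← hn]
  omega

lemma W_growth (B : DBPC P Lo Lc k₀) {g : ℕ} {ω : Ω}
    (hY : ∀ g' i j, 0 < B.Y g' i j ω) (h4 : 4 ≤ W B g ω) :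
    ∀ d, 4 + 2 * d ≤ W B (g + d) ω := by
  intro d
  induction d with
  | zero => simpa using h4
  | succ d ih =>
      have h4' : 4 ≤ W B (g + d) ω := by omega
      have := W_growth_step B (g := g + d) (ω := ω) (fun i j => hY (g + d + 1) i j) h4'
      have hrw : g + (d + 1) = (g + d) + 1 := rfl
      rw [hrw]
      omega

/-- the event that the process stays in `[1, K]` up to generation `t` -/
def Bdd (B : DBPC P Lo Lc k₀) (K t : ℕ) : Set Ω :=
  {ω | ∀ g, g ≤ t → 0 < W B g ω ∧ W B g ω ≤ K}

/-- the event that the process stays in `[1, K]` forever -/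
def EW (B : DBPC P Lo Lc k₀) (K : ℕ) : Set Ω :=
  {ω | ∀ g, 0 < W B g ω ∧ W B g ω ≤ K}

lemma EW_subset_Bdd (B : DBPC P Lo Lc k₀) (K t : ℕ) : EW B K ⊆ Bdd B K t :=
  fun ω h g _ => h g

lemma measBdd_F (B : DBPC P Lo Lc k₀) (K t : ℕ) : MeasurableSet[F B t] (Bdd B K t) := by
  have : Bdd B K t = ⋂ (g : ℕ) (_ : g ≤ t), W B g ⁻¹' {n | 0 < n ∧ n ≤ K} := by
    ext ω; simp [Bdd]
  rw [this]
  refine MeasurableSet.biInter (Set.to_countable _) fun g hg => ?_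
  exact ((measW_F B g).mono (F_mono B hg) le_rfl) trivial

lemma measWk_F (B : DBPC P Lo Lc k₀) (t k : ℕ) :
    MeasurableSet[F B t] {ω | W B t ω = k} := by
  have : {ω | W B t ω = k} = W B t ⁻¹' {k} := rfl
  rw [this]
  exact (measW_F B t) trivial

lemma null_Ypos (B : DBPC P Lo Lc k₀) (hc : Lc 0 = 0) :
    P {ω | ¬ ∀ g i j, 0 < B.Y g i j ω} = 0 := by
  have hsub : {ω | ¬ ∀ g i j, 0 < B.Y g i j ω} ⊆
      ⋃ (g : ℕ) (i : ℕ) (j : ℕ), B.Y g i j ⁻¹' {0} := by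
    intro ω hω
    push_neg at hω
    obtain ⟨g, i, j, h⟩ := hω
    simp only [Set.mem_iUnion]
    exact ⟨g, i, j, by simp only [Set.mem_preimage, Set.mem_singleton_iff]; omega⟩
  refine measure_mono_null hsub ?_
  refine measure_iUnion_null fun g => measure_iUnion_null fun i => measure_iUnion_null fun j => ?_
  rw [probY B g i j 0, hc]

lemma null_Xpos (B : DBPC P Lo Lc k₀) (ho : Lo 0 = 0) :
    P {ω | ¬ ∀ g i, 0 < B.X g i ω} = 0 := by
  have hsub : {ω | ¬ ∀ g i, 0 < B.X g i ω} ⊆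
      ⋃ (g : ℕ) (i : ℕ), B.X g i ⁻¹' {0} := by
    intro ω hω
    push_neg at hω
    obtain ⟨g, i, h⟩ := hω
    simp only [Set.mem_iUnion]
    exact ⟨g, i, by simp only [Set.mem_preimage, Set.mem_singleton_iff]; omega⟩
  refine measure_mono_null hsub ?_
  refine measure_iUnion_null fun g => measure_iUnion_null fun i => ?_
  rw [probX B g i 0, ho]

/-- Case `p₀ₒ = 1`: the process started at `1` dies immediately. -/
lemma EW_null_caseDegenerate (B : DBPC P Lo Lc 1) (h : Lo 0 = 1) (K : ℕ) :
    P (EW B K) = 0 := by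
  have hWone : ∀ ω, W B 1 ω = B.X 1 1 ω := by
    intro ω
    have h0 : W B 0 ω = 1 := rfl
    rw [W_succ, h0]
    simp
  have hsub : EW B K ⊆ (B.X 1 1 ⁻¹' {0})ᶜ := by
    intro ω hω
    have h1 := (hω 1).1
    rw [hWone ω] at h1
    simp only [Set.mem_compl_iff, Set.mem_preimage, Set.mem_singleton_iff]
    omega
  refine measure_mono_null hsub ?_
  rw [prob_compl_eq_zero_iff ((B.measX 1 1) (measurableSet_singleton 0))]
  rw [probX B 1 1 0, h]


lemma eventually_const_of_bounded (u : ℕ → ℕ) (K : ℕ)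
    (hm : ∀ g, u g ≤ u (g + 1)) (hb : ∀ g, u g ≤ K) :
    ∃ g₀, ∀ d, u (g₀ + d) = u g₀ := by
  classical
  have hmono : Monotone u := monotone_nat_of_le_succ hm
  set Q : ℕ → Prop := fun n => ∃ g, u g = n with hQ
  have hQ0 : Q (u 0) := ⟨0, rfl⟩
  have hub : u 0 ≤ K := hb 0
  obtain ⟨g₀, hg₀⟩ : Q (Nat.findGreatest Q K) :=
    Nat.findGreatest_spec (m := u 0) hub hQ0
  refine ⟨g₀, fun d => ?_⟩
  have hle : u g₀ ≤ u (g₀ + d) := hmono (Nat.le_add_right _ _)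
  have hge : u (g₀ + d) ≤ Nat.findGreatest Q K :=
    Nat.le_findGreatest (hb _) ⟨g₀ + d, rfl⟩
  omega

lemma X1_eq_one (B : DBPC P Lo Lc k₀) {g k : ℕ} {ω : Ω} (hk : 1 ≤ k)
    (hX : ∀ i, 0 < B.X (g + 1) i ω) (hg : W B g ω = k) (hg' : W B (g + 1) ω = k) :
    B.X (g + 1) 1 ω = 1 := by
  have h1mem : (1 : ℕ) ∈ Finset.Icc 1 k := by simp [hk]
  have hsplit : ∑ i ∈ Finset.Icc 1 k, B.X (g + 1) i ω
      = ∑ i ∈ Finset.Icc 1 k \ {1}, B.X (g + 1) i ω + B.X (g + 1) 1 ω :=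
    Finset.sum_eq_sum_sdiff_singleton_add h1mem _
  have hcard : (Finset.Icc 1 k \ {1}).card = k - 1 := by
    rw [Finset.sdiff_singleton_eq_erase, Finset.card_erase_of_mem h1mem, Nat.card_Icc]
    omega
  have hlow : (Finset.Icc 1 k \ {1}).card • 1 ≤ ∑ i ∈ Finset.Icc 1 k \ {1}, B.X (g + 1) i ω :=
    Finset.card_nsmul_le_sum _ _ 1 fun i _ => hX i
  rw [hcard, smul_eq_mul, mul_one] at hlow
  have htot := W_succ B g ω
  rw [hg, hg'] at htot
  have hXpos := hX 1
  omega

/-- Case `p₀ₒ = 0`: the process is nondecreasing, and cannot stabilize. -/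
lemma EW_null_caseZero (B : DBPC P Lo Lc k₀) (h0 : Lo 0 = 0) (h1 : Lo 1 ≠ 1) (K : ℕ) :
    P (EW B K) = 0 := by
  set AS : Set Ω := {ω | ∀ g i, 0 < B.X g i ω} with hAS
  have hASnull : P ASᶜ = 0 := null_Xpos B h0
  -- probability of staying constant equal to `k ≥ 1` from generation `g₀` on is zero
  have key : ∀ g₀ k : ℕ, 1 ≤ k → P ({ω | ∀ d, W B (g₀ + d) ω = k} ∩ AS) = 0 := by
    intro g₀ k hk
    classical
    have hr : Lo 1 < 1 := lt_of_le_of_ne (PMF.coe_le_one Lo 1) h1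
    have hbound : ∀ n : ℕ, P ({ω | ∀ d, W B (g₀ + d) ω = k} ∩ AS) ≤ Lo 1 ^ n := by
      intro n
      set sfin : Finset Idx := (Finset.Icc (g₀ + 1) (g₀ + n)).image
        (fun t => (Sum.inl (t, 1) : Idx)) with hsfin
      have hsub : {ω | ∀ d, W B (g₀ + d) ω = k} ∩ AS ⊆
          ⋂ a ∈ sfin, V B a ⁻¹' {(fun _ : Idx => 1) a} := by
        rintro ω ⟨hC, hA⟩
        simp only [Set.mem_iInter, hsfin, Finset.mem_image, Finset.mem_Icc]
        rintro a ⟨t, ⟨ht1, ht2⟩, rfl⟩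
        obtain ⟨d, rfl⟩ : ∃ d, t = (g₀ + d) + 1 := ⟨t - g₀ - 1, by omega⟩
        simp only [Set.mem_preimage, Set.mem_singleton_iff]
        show B.X ((g₀ + d) + 1) 1 ω = 1
        exact X1_eq_one B hk (fun i => hA _ i) (hC d) (hC (d + 1))
      refine le_trans (measure_mono hsub) ?_
      rw [probV_prod B sfin (fun _ => 1)]
      rw [hsfin, Finset.prod_image (by intro a _ b _ hab; simpa using hab)]
      have : ∀ t ∈ Finset.Icc (g₀ + 1) (g₀ + n),
          P (V B (Sum.inl (t, 1)) ⁻¹' {1}) = Lo 1 := by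
        intro t _
        show P (B.X t 1 ⁻¹' {1}) = Lo 1
        exact probX B t 1 1
      rw [Finset.prod_congr rfl this, Finset.prod_const, Nat.card_Icc,
        show g₀ + n + 1 - (g₀ + 1) = n by omega]
    have htend := ENNReal.tendsto_pow_atTop_nhds_zero_of_lt_one hr
    have hle : P ({ω | ∀ d, W B (g₀ + d) ω = k} ∩ AS) ≤ 0 :=
      ge_of_tendsto htend (Filter.Eventually.of_forall hbound)
    exact le_antisymm hle zero_le
  -- on AS, a trajectory in EW is eventually constant
  have hsub : EW B K ∩ AS ⊆
      ⋃ (g₀ : ℕ), ⋃ (k : ℕ), ⋃ (_ : 1 ≤ k), ({ω | ∀ d, W B (g₀ + d) ω = k} ∩ AS) := by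
    rintro ω ⟨hE, hA⟩
    obtain ⟨g₀, hg₀⟩ := eventually_const_of_bounded (fun g => W B g ω) K
      (fun g => le_W_succ B (fun i => hA (g + 1) i)) (fun g => (hE g).2)
    refine Set.mem_iUnion.2 ⟨g₀, Set.mem_iUnion.2 ⟨W B g₀ ω, Set.mem_iUnion.2
      ⟨(hE g₀).1, ⟨hg₀, hA⟩⟩⟩⟩
  have h2 : P (EW B K ∩ AS) = 0 := by
    refine measure_mono_null hsub ?_
    refine measure_iUnion_null fun g₀ => measure_iUnion_null fun k => measure_iUnion_null
      fun hk => key g₀ k hk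
  have : EW B K ⊆ (EW B K ∩ AS) ∪ ASᶜ := by
    intro ω hω
    by_cases hA : ω ∈ AS
    · exact Or.inl ⟨hω, hA⟩
    · exact Or.inr hA
  refine measure_mono_null this ?_
  refine le_antisymm (le_trans (measure_union_le _ _) ?_) zero_le
  rw [h2, hASnull, add_zero]


lemma Fut_le (B : DBPC P Lo Lc k₀) (t : ℕ) : Fut B t ≤ ‹MeasurableSpace Ω› :=
  iSup₂_le fun a _ => (measV B a).comap_le

/-- the pairs `(i, j)` with `1 ≤ j < i ≤ K` -/
def pairsK (K : ℕ) : Finset (ℕ × ℕ) :=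
  ((Finset.Icc 1 K) ×ˢ (Finset.Icc 1 K)).filter fun p => p.2 < p.1

/-- indices of the total-death pattern at generation `t + 1` -/
def sQ (K t : ℕ) : Finset Idx :=
  ((Finset.Icc 1 K).image fun i => Sum.inl (t + 1, i)) ∪
    ((pairsK K).image fun p => Sum.inr (t + 1, p.1, p.2))

lemma sQ_time {K t : ℕ} : ∀ a ∈ sQ K t, t < idxTime a := by
  intro a ha
  simp only [sQ, Finset.mem_union, Finset.mem_image] at ha
  rcases ha with ⟨i, _, rfl⟩ | ⟨p, _, rfl⟩ <;> simp [idxTime]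

lemma probQ (B : DBPC P Lo Lc k₀) (K t : ℕ) :
    P (⋂ a ∈ sQ K t, V B a ⁻¹' {(fun _ : Idx => 0) a})
      = Lo 0 ^ K * Lc 0 ^ (pairsK K).card := by
  rw [probV_prod B (sQ K t) (fun _ => 0)]
  have hdisj : Disjoint ((Finset.Icc 1 K).image fun i => (Sum.inl (t + 1, i) : Idx))
      ((pairsK K).image fun p => (Sum.inr (t + 1, p.1, p.2) : Idx)) := by
    rw [Finset.disjoint_left]
    intro a ha hb
    simp only [Finset.mem_image] at ha hb
    obtain ⟨i, _, rfl⟩ := ha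
    obtain ⟨p, _, h⟩ := hb
    exact absurd h (by simp)
  have hinj1 : Set.InjOn (fun i : ℕ => (Sum.inl (t + 1, i) : Idx)) (Finset.Icc 1 K) := by
    intro a _ b _ h; simpa using h
  have hinj2 : Set.InjOn (fun p : ℕ × ℕ => (Sum.inr (t + 1, p.1, p.2) : Idx)) (pairsK K) := by
    intro a _ b _ h
    simp only [Sum.inr.injEq, Prod.mk.injEq] at h
    exact Prod.ext h.2.1 h.2.2
  rw [sQ, Finset.prod_union hdisj]
  congr 1
  · rw [Finset.prod_image hinj1]
    have : ∀ i ∈ Finset.Icc 1 K, P (V B (Sum.inl (t + 1, i)) ⁻¹' {0}) = Lo 0 := by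
      intro i _
      exact probX B (t + 1) i 0
    rw [Finset.prod_congr rfl this, Finset.prod_const, Nat.card_Icc,
      show K + 1 - 1 = K by omega]
  · rw [Finset.prod_image hinj2]
    have : ∀ p ∈ pairsK K, P (V B (Sum.inr (t + 1, p.1, p.2)) ⁻¹' {0}) = Lc 0 := by
      intro p _
      exact probY B (t + 1) p.1 p.2 0
    rw [Finset.prod_congr rfl this, Finset.prod_const]

lemma Q_kills (B : DBPC P Lo Lc k₀) {K t : ℕ} {ω : Ω} (hB : ω ∈ Bdd B K t)
    (hQ : ω ∈ ⋂ a ∈ sQ K t, V B a ⁻¹' {(fun _ : Idx => 0) a}) :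
    W B (t + 1) ω = 0 := by
  simp only [Set.mem_iInter, Set.mem_preimage, Set.mem_singleton_iff] at hQ
  have hWt := hB t le_rfl
  rw [W_succ]
  have hmem : ∀ i ∈ Finset.Icc 1 (W B t ω), (Sum.inl (t + 1, i) : Idx) ∈ sQ K t := by
    intro i hi
    simp only [Finset.mem_Icc] at hi
    simp only [sQ, Finset.mem_union, Finset.mem_image]
    exact Or.inl ⟨i, by simp only [Finset.mem_Icc]; omega, rfl⟩
  have hX0 : ∑ i ∈ Finset.Icc 1 (W B t ω), B.X (t + 1) i ω = 0 := by
    refine Finset.sum_eq_zero fun i hi => ?_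
    exact hQ _ (hmem i hi)
  have hY0 : ∑ i ∈ Finset.Icc 1 (W B t ω), ∑ j ∈ Finset.Ico 1 i, B.Y (t + 1) i j ω = 0 := by
    refine Finset.sum_eq_zero fun i hi => Finset.sum_eq_zero fun j hj => ?_
    simp only [Finset.mem_Icc] at hi
    simp only [Finset.mem_Ico] at hj
    refine hQ (Sum.inr (t + 1, i, j)) ?_
    simp only [sQ, Finset.mem_union, Finset.mem_image]
    refine Or.inr ⟨(i, j), ?_, rfl⟩
    simp only [pairsK, Finset.mem_filter, Finset.mem_product, Finset.mem_Icc]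
    omega
  rw [hX0, hY0]

/-- Case `p₀ₒ > 0` and `p₀c > 0`: uniform chance of immediate total death. -/
lemma EW_null_casePos (B : DBPC P Lo Lc k₀) (h0 : Lo 0 ≠ 0) (hc : Lc 0 ≠ 0) (K : ℕ) :
    P (EW B K) = 0 := by
  set ε : ENNReal := Lo 0 ^ K * Lc 0 ^ (pairsK K).card with hε
  have hεpos : ε ≠ 0 := by
    simp only [hε, mul_ne_zero_iff]
    exact ⟨pow_ne_zero _ h0, pow_ne_zero _ hc⟩
  have hεle : ε ≤ 1 :=
    mul_le_one' (pow_le_one' (PMF.coe_le_one _ _) _) (pow_le_one' (PMF.coe_le_one _ _) _)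
  set Qset : ℕ → Set Ω := fun t => ⋂ a ∈ sQ K t, V B a ⁻¹' {(fun _ : Idx => 0) a} with hQset
  have hQmeas : ∀ t, MeasurableSet[Fut B t] (Qset t) :=
    fun t => measSet_cyl_Fut B (sQ K t) sQ_time _
  have hQamb : ∀ t, MeasurableSet (Qset t) :=
    fun t => Fut_le B t _ (hQmeas t)
  have hind : ∀ n, P (Bdd B K n) ≤ (1 - ε) ^ n := by
    intro n
    induction n with
    | zero => simpa using prob_le_one
    | succ n ih =>
        have hsub : Bdd B K (n + 1) ⊆ Bdd B K n ∩ (Qset n)ᶜ := by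
          intro ω hω
          refine ⟨fun g hg => hω g (by omega), fun hQ => ?_⟩
          have := Q_kills B (fun g hg => hω g (by omega)) hQ
          have hpos := (hω (n + 1) le_rfl).1
          omega
        refine le_trans (measure_mono hsub) ?_
        rw [indep_mul B (measBdd_F B K n) ((hQmeas n).compl)]
        have hQc : P (Qset n)ᶜ = 1 - ε := by
          rw [prob_compl_eq_one_sub (hQamb n), hQset]
          simp only
          rw [probQ B K n]
        rw [hQc, pow_succ]
        exact mul_le_mul' ih le_rfl
  have hr : (1 : ENNReal) - ε < 1 :=
    ENNReal.sub_lt_self ENNReal.one_ne_top one_ne_zero hεpos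
  have htend := ENNReal.tendsto_pow_atTop_nhds_zero_of_lt_one hr
  have hle : P (EW B K) ≤ 0 := by
    refine ge_of_tendsto htend (Filter.Eventually.of_forall fun n => ?_)
    exact le_trans (measure_mono (EW_subset_Bdd B K n)) (hind n)
  exact le_antisymm hle zero_le


lemma exists_ne_zero_support (L : PMF ℕ) (h : L 0 ≠ 1) : ∃ u, u ≠ 0 ∧ L u ≠ 0 := by
  by_contra hcon
  push_neg at hcon
  have ht := L.tsum_coe
  rw [tsum_eq_single 0 (fun b hb => hcon b hb)] at ht
  exact h ht

lemma cyl_spec (B : DBPC P Lo Lc k₀) {s : Finset Idx} {c : Idx → ℕ} {ω : Ω}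
    (h : ω ∈ ⋂ a ∈ s, V B a ⁻¹' {c a}) : ∀ a ∈ s, V B a ω = c a := by
  simpa only [Set.mem_iInter, Set.mem_preimage, Set.mem_singleton_iff] using h

lemma W_eval1 (B : DBPC P Lo Lc k₀) {t : ℕ} {ω : Ω} (h : W B t ω = 1) :
    W B (t + 1) ω = B.X (t + 1) 1 ω := by
  rw [W_succ, h]
  simp [Finset.Icc_self, Finset.Ico_self]

lemma W_eval2 (B : DBPC P Lo Lc k₀) {t : ℕ} {ω : Ω} (h : W B t ω = 2) :
    W B (t + 1) ω = B.X (t + 1) 1 ω + B.X (t + 1) 2 ω + B.Y (t + 1) 2 1 ω := by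
  rw [W_succ, h, show (Finset.Icc 1 2 : Finset ℕ) = {1, 2} from by decide]
  rw [Finset.sum_insert (by decide), Finset.sum_singleton,
    Finset.sum_insert (by decide), Finset.sum_singleton,
    show (Finset.Ico 1 1 : Finset ℕ) = ∅ from by decide,
    show (Finset.Ico 1 2 : Finset ℕ) = {1} from by decide,
    Finset.sum_empty, Finset.sum_singleton]
  ring

lemma W_eval3 (B : DBPC P Lo Lc k₀) {t : ℕ} {ω : Ω} (h : W B t ω = 3) :
    W B (t + 1) ω = B.X (t + 1) 1 ω + B.X (t + 1) 2 ω + B.X (t + 1) 3 ω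
      + B.Y (t + 1) 2 1 ω + B.Y (t + 1) 3 1 ω + B.Y (t + 1) 3 2 ω := by
  rw [W_succ, h, show (Finset.Icc 1 3 : Finset ℕ) = {1, 2, 3} from by decide]
  rw [Finset.sum_insert (by decide), Finset.sum_insert (by decide), Finset.sum_singleton,
    Finset.sum_insert (by decide), Finset.sum_insert (by decide), Finset.sum_singleton,
    show (Finset.Ico 1 1 : Finset ℕ) = ∅ from by decide,
    show (Finset.Ico 1 2 : Finset ℕ) = {1} from by decide,
    show (Finset.Ico 1 3 : Finset ℕ) = {1, 2} from by decide,
    Finset.sum_empty, Finset.sum_singleton, Finset.sum_insert (by decide),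
    Finset.sum_singleton]
  ring

/-- escape patterns: from a state `k ∈ {1, 2, 3}`, with a fixed positive probability
the process is at `0` or at least `4` two generations later. -/
lemma escape_pattern (B : DBPC P Lo Lc k₀) {u v : ℕ} (hu : u ≠ 0) (hv : v ≠ 0)
    (hLu : Lo u ≠ 0) (hLv : Lc v ≠ 0) (hL0 : Lo 0 ≠ 0) (k : ℕ) (hk : 1 ≤ k) (hk3 : k ≤ 3) :
    ∃ ε : ENNReal, ε ≠ 0 ∧ ∀ t, ∃ (s : Finset Idx) (c : Idx → ℕ),
      (∀ a ∈ s, t < idxTime a) ∧ P (⋂ a ∈ s, V B a ⁻¹' {c a}) = ε ∧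
      ∀ ω, (∀ g i j, 0 < B.Y g i j ω) → W B t ω = k →
        ω ∈ (⋂ a ∈ s, V B a ⁻¹' {c a}) → W B (t + 2) ω = 0 ∨ 4 ≤ W B (t + 2) ω := by
  interval_cases k
  · -- k = 1 : die in one step
    refine ⟨Lo 0, hL0, fun t => ⟨{Sum.inl (t + 1, 1)}, fun _ => 0, ?_, ?_, ?_⟩⟩
    · intro a ha
      simp only [Finset.mem_singleton] at ha
      subst ha; simp [idxTime]
    · rw [probV_prod, Finset.prod_singleton]
      exact probX B (t + 1) 1 0
    · intro ω hY h1 hcyl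
      have hX := cyl_spec B hcyl (Sum.inl (t + 1, 1)) (by simp)
      have hW1 : W B (t + 1) ω = 0 := by rw [W_eval1 B h1]; exact hX
      left
      have := W_zero_add B hW1 1
      simpa [show t + 1 + 1 = t + 2 from rfl] using this
  · -- k = 2
    by_cases h23 : 2 * u + v = 3
    · -- u = v = 1 : go through 3 and then jump to 6
      have hu1 : u = 1 := by omega
      have hv1 : v = 1 := by omega
      subst hu1 hv1
      refine ⟨(Lo 1 * Lo 1 * Lc 1) * (Lo 1 * Lo 1 * Lo 1 * Lc 1 * Lc 1 * Lc 1),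
        by
          refine mul_ne_zero (mul_ne_zero (mul_ne_zero hLu hLu) hLv) ?_
          exact mul_ne_zero (mul_ne_zero (mul_ne_zero (mul_ne_zero
            (mul_ne_zero hLu hLu) hLu) hLv) hLv) hLv,
        fun t => ?_⟩
      refine ⟨({Sum.inl (t + 1, 1), Sum.inl (t + 1, 2), Sum.inr (t + 1, 2, 1)} : Finset Idx)
        ∪ ({Sum.inl (t + 2, 1), Sum.inl (t + 2, 2), Sum.inl (t + 2, 3), Sum.inr (t + 2, 2, 1),
            Sum.inr (t + 2, 3, 1), Sum.inr (t + 2, 3, 2)} : Finset Idx),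
        fun _ => 1, ?_, ?_, ?_⟩
      · intro a ha
        simp only [Finset.mem_union, Finset.mem_insert, Finset.mem_singleton] at ha
        rcases ha with (rfl | rfl | rfl) | (rfl | rfl | rfl | rfl | rfl | rfl) <;>
          simp [idxTime]
      · rw [probV_prod]
        rw [Finset.prod_union (by
          rw [Finset.disjoint_left]
          intro a ha hb
          simp only [Finset.mem_insert, Finset.mem_singleton] at ha hb
          rcases ha with rfl | rfl | rfl <;> simp_all)]
        rw [Finset.prod_insert (by simp), Finset.prod_insert (by simp), Finset.prod_singleton,
          Finset.prod_insert (by simp), Finset.prod_insert (by simp),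
          Finset.prod_insert (by simp), Finset.prod_insert (by simp),
          Finset.prod_insert (by simp), Finset.prod_singleton]
        show P (B.X (t+1) 1 ⁻¹' {1}) * (P (B.X (t+1) 2 ⁻¹' {1}) * P (B.Y (t+1) 2 1 ⁻¹' {1}))
          * (P (B.X (t+2) 1 ⁻¹' {1}) * (P (B.X (t+2) 2 ⁻¹' {1}) * (P (B.X (t+2) 3 ⁻¹' {1})
          * (P (B.Y (t+2) 2 1 ⁻¹' {1}) * (P (B.Y (t+2) 3 1 ⁻¹' {1})
          * P (B.Y (t+2) 3 2 ⁻¹' {1})))))) = _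
        rw [probX, probX, probY, probX, probX, probX, probY, probY, probY]
        ring
      · intro ω hYp h2 hcyl
        have hc := cyl_spec B hcyl
        have e1 : B.X (t + 1) 1 ω = 1 := hc (Sum.inl (t + 1, 1)) (by simp)
        have e2 : B.X (t + 1) 2 ω = 1 := hc (Sum.inl (t + 1, 2)) (by simp)
        have e3 : B.Y (t + 1) 2 1 ω = 1 := hc (Sum.inr (t + 1, 2, 1)) (by simp)
        have hW1 : W B (t + 1) ω = 3 := by
          rw [W_eval2 B h2]; omega
        right
        have f1 : B.X (t + 2) 1 ω = 1 := hc (Sum.inl (t + 2, 1)) (by simp)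
        have f2 : B.X (t + 2) 2 ω = 1 := hc (Sum.inl (t + 2, 2)) (by simp)
        have f3 : B.X (t + 2) 3 ω = 1 := hc (Sum.inl (t + 2, 3)) (by simp)
        have f4 : B.Y (t + 2) 2 1 ω = 1 := hc (Sum.inr (t + 2, 2, 1)) (by simp)
        have f5 : B.Y (t + 2) 3 1 ω = 1 := hc (Sum.inr (t + 2, 3, 1)) (by simp)
        have f6 : B.Y (t + 2) 3 2 ω = 1 := hc (Sum.inr (t + 2, 3, 2)) (by simp)
        have := W_eval3 B (t := t + 1) hW1
        rw [show t + 1 + 1 = t + 2 from rfl] at this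
        omega
    · -- 2u + v ≥ 4 : jump above 4 in one step
      refine ⟨Lo u * Lo u * Lc v, mul_ne_zero (mul_ne_zero hLu hLu) hLv, fun t => ?_⟩
      refine ⟨({Sum.inl (t + 1, 1), Sum.inl (t + 1, 2), Sum.inr (t + 1, 2, 1)} : Finset Idx),
        Sum.elim (fun _ => u) (fun _ => v), ?_, ?_, ?_⟩
      · intro a ha
        simp only [Finset.mem_insert, Finset.mem_singleton] at ha
        rcases ha with rfl | rfl | rfl <;> simp [idxTime]
      · rw [probV_prod]
        rw [Finset.prod_insert (by simp), Finset.prod_insert (by simp), Finset.prod_singleton]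
        show P (B.X (t+1) 1 ⁻¹' {u}) * (P (B.X (t+1) 2 ⁻¹' {u}) * P (B.Y (t+1) 2 1 ⁻¹' {v})) = _
        rw [probX, probX, probY]
        ring
      · intro ω hYp h2 hcyl
        have hc := cyl_spec B hcyl
        have e1 : B.X (t + 1) 1 ω = u := hc (Sum.inl (t + 1, 1)) (by simp)
        have e2 : B.X (t + 1) 2 ω = u := hc (Sum.inl (t + 1, 2)) (by simp)
        have e3 : B.Y (t + 1) 2 1 ω = v := hc (Sum.inr (t + 1, 2, 1)) (by simp)
        have hW1 : W B (t + 1) ω = 2 * u + v := by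
          rw [W_eval2 B h2]; omega
        right
        have h4 : 4 ≤ W B (t + 1) ω := by omega
        have := W_growth B (g := t + 1) hYp h4 1
        rw [show t + 1 + 1 = t + 2 from rfl] at this
        omega
  · -- k = 3 : jump to at least 6 in one step
    refine ⟨Lo u * Lo u * Lo u * Lc v * Lc v * Lc v,
      mul_ne_zero (mul_ne_zero (mul_ne_zero (mul_ne_zero (mul_ne_zero hLu hLu) hLu) hLv) hLv) hLv,
      fun t => ?_⟩
    refine ⟨({Sum.inl (t + 1, 1), Sum.inl (t + 1, 2), Sum.inl (t + 1, 3), Sum.inr (t + 1, 2, 1),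
        Sum.inr (t + 1, 3, 1), Sum.inr (t + 1, 3, 2)} : Finset Idx),
      Sum.elim (fun _ => u) (fun _ => v), ?_, ?_, ?_⟩
    · intro a ha
      simp only [Finset.mem_insert, Finset.mem_singleton] at ha
      rcases ha with rfl | rfl | rfl | rfl | rfl | rfl <;> simp [idxTime]
    · rw [probV_prod]
      rw [Finset.prod_insert (by simp), Finset.prod_insert (by simp),
        Finset.prod_insert (by simp), Finset.prod_insert (by simp),
        Finset.prod_insert (by simp), Finset.prod_singleton]
      show P (B.X (t+1) 1 ⁻¹' {u}) * (P (B.X (t+1) 2 ⁻¹' {u}) * (P (B.X (t+1) 3 ⁻¹' {u})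
        * (P (B.Y (t+1) 2 1 ⁻¹' {v}) * (P (B.Y (t+1) 3 1 ⁻¹' {v})
        * P (B.Y (t+1) 3 2 ⁻¹' {v}))))) = _
      rw [probX, probX, probX, probY, probY, probY]
      ring
    · intro ω hYp h3 hcyl
      have hc := cyl_spec B hcyl
      have e1 : B.X (t + 1) 1 ω = u := hc (Sum.inl (t + 1, 1)) (by simp)
      have e2 : B.X (t + 1) 2 ω = u := hc (Sum.inl (t + 1, 2)) (by simp)
      have e3 : B.X (t + 1) 3 ω = u := hc (Sum.inl (t + 1, 3)) (by simp)
      have e4 : B.Y (t + 1) 2 1 ω = v := hc (Sum.inr (t + 1, 2, 1)) (by simp)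
      have e5 : B.Y (t + 1) 3 1 ω = v := hc (Sum.inr (t + 1, 3, 1)) (by simp)
      have e6 : B.Y (t + 1) 3 2 ω = v := hc (Sum.inr (t + 1, 3, 2)) (by simp)
      have hW1 : W B (t + 1) ω = 3 * u + 3 * v := by
        rw [W_eval3 B h3]; omega
      right
      have h4 : 4 ≤ W B (t + 1) ω := by omega
      have := W_growth B (g := t + 1) hYp h4 1
      rw [show t + 1 + 1 = t + 2 from rfl] at this
      omega


/-- Case `0 < p₀ₒ < 1` and `p₀c = 0`. -/
lemma EW_null_caseCoop (B : DBPC P Lo Lc k₀) (h00 : Lo 0 ≠ 0) (h01 : Lo 0 ≠ 1)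
    (hc0 : Lc 0 = 0) (K : ℕ) : P (EW B K) = 0 := by
  classical
  obtain ⟨u, hu, hLu⟩ := exists_ne_zero_support Lo h01
  obtain ⟨v, hv, hLv⟩ := exists_ne_zero_support Lc (by rw [hc0]; exact zero_ne_one)
  set M : ℕ := K + 3 with hM
  set ASY : Set Ω := {ω | ∀ g i j, 0 < B.Y g i j ω} with hASY
  have hASYnull : P ASYᶜ = 0 := null_Ypos B hc0
  obtain ⟨ε₁, hε₁, hpat1⟩ := escape_pattern B hu hv hLu hLv h00 1 le_rfl (by omega)
  obtain ⟨ε₂, hε₂, hpat2⟩ := escape_pattern B hu hv hLu hLv h00 2 (by omega) (by omega)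
  obtain ⟨ε₃, hε₃, hpat3⟩ := escape_pattern B hu hv hLu hLv h00 3 (by omega) (by omega)
  set ε : ENNReal := min ε₁ (min ε₂ ε₃) with hε
  have hεne : ε ≠ 0 := by
    rw [hε]
    exact (lt_min (pos_iff_ne_zero.2 hε₁)
      (lt_min (pos_iff_ne_zero.2 hε₂) (pos_iff_ne_zero.2 hε₃))).ne'
  set r : ENNReal := 1 - ε with hr
  have hrlt : r < 1 := ENNReal.sub_lt_self ENNReal.one_ne_top one_ne_zero hεne
  -- the per-state escape bound
  have hstate : ∀ n : ℕ, ∀ k ∈ Finset.Icc 1 3,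
      P (Bdd B K ((n + 1) * M) ∩ {ω | W B (n * M) ω = k})
        ≤ P (Bdd B K (n * M) ∩ {ω | W B (n * M) ω = k}) * r := by
    intro n k hk
    simp only [Finset.mem_Icc] at hk
    obtain ⟨hk1, hk3⟩ := hk
    set t₀ := n * M with ht₀
    have hM1 : (n + 1) * M = t₀ + M := by rw [ht₀]; ring
    have hpatk : ∃ (s : Finset Idx) (c : Idx → ℕ),
        (∀ a ∈ s, t₀ < idxTime a) ∧ ε ≤ P (⋂ a ∈ s, V B a ⁻¹' {c a}) ∧
        ∀ ω, (∀ g i j, 0 < B.Y g i j ω) → W B t₀ ω = k →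
          ω ∈ (⋂ a ∈ s, V B a ⁻¹' {c a}) → W B (t₀ + 2) ω = 0 ∨ 4 ≤ W B (t₀ + 2) ω := by
      interval_cases k
      · obtain ⟨s, c, h1', h2', h3'⟩ := hpat1 t₀
        exact ⟨s, c, h1', by rw [h2']; exact min_le_left _ _, h3'⟩
      · obtain ⟨s, c, h1', h2', h3'⟩ := hpat2 t₀
        exact ⟨s, c, h1', by rw [h2']; exact le_trans (min_le_right _ _) (min_le_left _ _), h3'⟩
      · obtain ⟨s, c, h1', h2', h3'⟩ := hpat3 t₀
        exact ⟨s, c, h1', by rw [h2']; exact le_trans (min_le_right _ _) (min_le_right _ _), h3'⟩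
    obtain ⟨s, c, htime, hPge, hesc⟩ := hpatk
    set G : Set Ω := ⋂ a ∈ s, V B a ⁻¹' {c a} with hG
    have hGFut : MeasurableSet[Fut B t₀] G := measSet_cyl_Fut B s htime c
    have hGamb : MeasurableSet G := Fut_le B t₀ _ hGFut
    have hsub : Bdd B K ((n + 1) * M) ∩ {ω | W B t₀ ω = k} ⊆
        ((Bdd B K t₀ ∩ {ω | W B t₀ ω = k}) ∩ Gᶜ) ∪ ASYᶜ := by
      rintro ω ⟨hB, hWk⟩
      rw [hM1] at hB
      by_cases hA : ω ∈ ASY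
      · refine Set.mem_union_left _ ⟨⟨fun g hg => hB g (by omega), hWk⟩, fun hωG => ?_⟩
        have hesc' := hesc ω hA hWk hωG
        have hBtM := hB (t₀ + M) le_rfl
        rcases hesc' with h0 | h4
        · have := W_zero_add B h0 (M - 2)
          rw [show t₀ + 2 + (M - 2) = t₀ + M by omega] at this
          omega
        · have := W_growth B (g := t₀ + 2) hA h4 (M - 2)
          rw [show t₀ + 2 + (M - 2) = t₀ + M by omega] at this
          omega
      · exact Set.mem_union_right _ hA
    calc P (Bdd B K ((n + 1) * M) ∩ {ω | W B t₀ ω = k})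
        ≤ P (((Bdd B K t₀ ∩ {ω | W B t₀ ω = k}) ∩ Gᶜ) ∪ ASYᶜ) := measure_mono hsub
      _ ≤ P ((Bdd B K t₀ ∩ {ω | W B t₀ ω = k}) ∩ Gᶜ) + P ASYᶜ := measure_union_le _ _
      _ = P ((Bdd B K t₀ ∩ {ω | W B t₀ ω = k}) ∩ Gᶜ) := by rw [hASYnull, add_zero]
      _ = P (Bdd B K t₀ ∩ {ω | W B t₀ ω = k}) * P Gᶜ :=
          indep_mul B ((measBdd_F B K t₀).inter (measWk_F B t₀ k)) hGFut.compl
      _ ≤ P (Bdd B K t₀ ∩ {ω | W B t₀ ω = k}) * r := by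
          refine mul_le_mul' le_rfl ?_
          rw [prob_compl_eq_one_sub hGamb, hr]
          exact tsub_le_tsub_left hPge 1
  -- states `k ≥ 4` at a block start are impossible
  have hbig : ∀ n : ℕ, ∀ k, 4 ≤ k →
      P (Bdd B K ((n + 1) * M) ∩ {ω | W B (n * M) ω = k}) = 0 := by
    intro n k hk4
    refine measure_mono_null ?_ hASYnull
    rintro ω ⟨hB, hWk⟩
    have hMeq : (n + 1) * M = n * M + M := by ring
    rw [hMeq] at hB
    simp only [Set.mem_compl_iff]
    intro hA
    have hBtM := hB (n * M + M) le_rfl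
    simp only [Set.mem_setOf_eq] at hWk
    have := W_growth B (g := n * M) hA (by omega) M
    omega
  -- the block induction
  have hind : ∀ n : ℕ, P (Bdd B K (n * M)) ≤ r ^ n := by
    intro n
    induction n with
    | zero => simpa using prob_le_one
    | succ n ih =>
        have hcover : Bdd B K ((n + 1) * M) ⊆
            ⋃ k ∈ Finset.Icc 1 K, (Bdd B K ((n + 1) * M) ∩ {ω | W B (n * M) ω = k}) := by
          intro ω hω
          have h0 := hω (n * M) (by
            calc n * M ≤ n * M + M := Nat.le_add_right _ _
              _ = (n + 1) * M := by ring)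
          simp only [Set.mem_iUnion, Finset.mem_Icc]
          exact ⟨W B (n * M) ω, ⟨by omega, h0.2⟩, hω, rfl⟩
        have hsplit : P (Bdd B K ((n + 1) * M)) ≤
            ∑ k ∈ Finset.Icc 1 K, P (Bdd B K ((n + 1) * M) ∩ {ω | W B (n * M) ω = k}) :=
          le_trans (measure_mono hcover) (measure_biUnion_finset_le _ _)
        have hsum2 : ∑ k ∈ Finset.Icc 4 K,
            P (Bdd B K ((n + 1) * M) ∩ {ω | W B (n * M) ω = k}) = 0 :=
          Finset.sum_eq_zero fun k hk => hbig n k (by simp only [Finset.mem_Icc] at hk; omega)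
        have hsplit2 : ∑ k ∈ Finset.Icc 1 K,
            P (Bdd B K ((n + 1) * M) ∩ {ω | W B (n * M) ω = k})
            ≤ ∑ k ∈ Finset.Icc 1 3,
              P (Bdd B K ((n + 1) * M) ∩ {ω | W B (n * M) ω = k}) := by
          have hsubset : Finset.Icc 1 K ⊆ Finset.Icc 1 3 ∪ Finset.Icc 4 K := by
            intro k hk
            simp only [Finset.mem_Icc, Finset.mem_union] at hk ⊢
            omega
          have hdisjI : Disjoint (Finset.Icc 1 3) (Finset.Icc 4 K) := by
            rw [Finset.disjoint_left]
            intro k hk hk'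
            simp only [Finset.mem_Icc] at hk hk'
            omega
          calc ∑ k ∈ Finset.Icc 1 K, P (Bdd B K ((n + 1) * M) ∩ {ω | W B (n * M) ω = k})
              ≤ ∑ k ∈ Finset.Icc 1 3 ∪ Finset.Icc 4 K,
                P (Bdd B K ((n + 1) * M) ∩ {ω | W B (n * M) ω = k}) :=
                Finset.sum_le_sum_of_subset hsubset
            _ = (∑ k ∈ Finset.Icc 1 3, P (Bdd B K ((n + 1) * M) ∩ {ω | W B (n * M) ω = k}))
                + ∑ k ∈ Finset.Icc 4 K,
                  P (Bdd B K ((n + 1) * M) ∩ {ω | W B (n * M) ω = k}) :=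
                Finset.sum_union hdisjI
            _ = _ := by rw [hsum2, add_zero]
        have hbound : ∑ k ∈ Finset.Icc 1 3,
            P (Bdd B K ((n + 1) * M) ∩ {ω | W B (n * M) ω = k})
            ≤ (∑ k ∈ Finset.Icc 1 3, P (Bdd B K (n * M) ∩ {ω | W B (n * M) ω = k})) * r := by
          rw [Finset.sum_mul]
          exact Finset.sum_le_sum fun k hk => hstate n k hk
        have hdisj : ∑ k ∈ Finset.Icc 1 3, P (Bdd B K (n * M) ∩ {ω | W B (n * M) ω = k})
            ≤ P (Bdd B K (n * M)) := by
          rw [← measure_biUnion_finset ?_ ?_]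
          · refine measure_mono ?_
            intro ω hω
            simp only [Set.mem_iUnion] at hω
            obtain ⟨k, _, h, _⟩ := hω
            exact h
          · intro k₁ h₁ k₂ h₂ hne
            refine Set.disjoint_left.2 ?_
            rintro ω ⟨-, h1⟩ ⟨-, h2⟩
            simp only [Set.mem_setOf_eq] at h1 h2
            exact hne (h1 ▸ h2 ▸ rfl)
          · intro k _
            exact ((F_le B _ _ (measBdd_F B K _))).inter (F_le B _ _ (measWk_F B (n * M) k))
        calc P (Bdd B K ((n + 1) * M))
            ≤ ∑ k ∈ Finset.Icc 1 3, P (Bdd B K ((n + 1) * M) ∩ {ω | W B (n * M) ω = k}) :=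
              le_trans hsplit hsplit2
          _ ≤ (∑ k ∈ Finset.Icc 1 3, P (Bdd B K (n * M) ∩ {ω | W B (n * M) ω = k})) * r :=
              hbound
          _ ≤ P (Bdd B K (n * M)) * r := mul_le_mul' hdisj le_rfl
          _ ≤ r ^ n * r := mul_le_mul' ih le_rfl
          _ = r ^ (n + 1) := (pow_succ r n).symm
  have htend := ENNReal.tendsto_pow_atTop_nhds_zero_of_lt_one hrlt
  have hle : P (EW B K) ≤ 0 := by
    refine ge_of_tendsto htend (Filter.Eventually.of_forall fun n => ?_)
    exact le_trans (measure_mono (EW_subset_Bdd B K (n * M))) (hind n)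
  exact le_antisymm hle zero_le

/-- The combined instability result: a DBPC started at `1` with `p₁ₒ ≠ 1`
cannot stay in a bounded window `[1, K]` forever. -/
lemma EW_null (B : DBPC P Lo Lc 1) (h1 : Lo 1 ≠ 1) (K : ℕ) : P (EW B K) = 0 := by
  by_cases h00 : Lo 0 = 0
  · exact EW_null_caseZero B h00 h1 K
  · by_cases h01 : Lo 0 = 1
    · exact EW_null_caseDegenerate B h01 K
    · by_cases hc0 : Lc 0 = 0
      · exact EW_null_caseCoop B h00 h01 hc0 K
      · exact EW_null_casePos B h00 hc0 K


/-- the process version: staying in `[1, K]` forever has probability zero -/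
lemma EZ_null (B : DBPC P Lo Lc 1) (h1 : Lo 1 ≠ 1) (K : ℕ) :
    P {ω | ∀ g, 0 < B.Z g ω ∧ B.Z g ω ≤ K} = 0 := by
  have hbad : P {ω | ¬ ∀ g, B.Z g ω = W B g ω} = 0 := ae_iff.mp (W_ae B)
  have hsub : {ω | ∀ g, 0 < B.Z g ω ∧ B.Z g ω ≤ K} ⊆
      EW B K ∪ {ω | ¬ ∀ g, B.Z g ω = W B g ω} := by
    intro ω hω
    by_cases hZW : ∀ g, B.Z g ω = W B g ω
    · exact Or.inl fun g => by rw [← hZW g]; exact hω g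
    · exact Or.inr hZW
  refine measure_mono_null hsub ?_
  refine le_antisymm (le_trans (measure_union_le _ _) ?_) zero_le
  rw [EW_null B h1 K, hbad, add_zero]

end DBPCaux

open DBPCaux

/-- For a single DBPC started at `1` with positive survival probability `π`,
`p_{1,o} ≠ 1` and not both `p_{0,o} = 1` and `p_{1,c} = 1`, the probability
of the total size ever reaching `b_N`, and of the current size ever reaching
`b_N`, both converge to `π` whenever `b_N → ∞`. -/
theorem dbpc_reaching_level_eq_survival {Ω : Type*} [MeasurableSpace Ω]
    (P : Measure Ω) [IsProbabilityMeasure P] (Lo Lc : PMF ℕ)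
    (B : DBPC P Lo Lc 1)
    (hπ : 0 < (P {ω | ∀ g : ℕ, 0 < B.Z g ω}).toReal)
    (h1 : Lo 1 ≠ 1) (h2 : ¬(Lo 0 = 1 ∧ Lc 1 = 1))
    (b : ℕ → ℝ) (hb : Tendsto b atTop atTop) :
    Tendsto (fun N => (P {ω | ∃ g : ℕ,
        b N ≤ ((∑ i ∈ Finset.range (g + 1), B.Z i ω : ℕ) : ℝ)}).toReal) atTop
      (nhds ((P {ω | ∀ g : ℕ, 0 < B.Z g ω}).toReal)) ∧
    Tendsto (fun N => (P {ω | ∃ g : ℕ, b N ≤ ((B.Z g ω : ℕ) : ℝ)}).toReal) atTop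
      (nhds ((P {ω | ∀ g : ℕ, 0 < B.Z g ω}).toReal)) := by
  classical
  set Sv : Set Ω := {ω | ∀ g : ℕ, 0 < B.Z g ω} with hSv
  -- the good set: the recursion holds and the process is not trapped in a window
  set Gd : Set Ω := {ω | (∀ g, B.Z g ω = W B g ω) ∧
    ∀ K : ℕ, ¬ ∀ g, 0 < B.Z g ω ∧ B.Z g ω ≤ K} with hGd
  have hGdnull : P Gdᶜ = 0 := by
    have h1' : P {ω | ¬ ∀ g, B.Z g ω = W B g ω} = 0 := ae_iff.mp (W_ae B)
    have h2' : P {ω | ¬ ∀ K : ℕ, ¬ ∀ g, 0 < B.Z g ω ∧ B.Z g ω ≤ K} = 0 := by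
      have hsub : {ω | ¬ ∀ K : ℕ, ¬ ∀ g, 0 < B.Z g ω ∧ B.Z g ω ≤ K} ⊆
          ⋃ K : ℕ, {ω | ∀ g, 0 < B.Z g ω ∧ B.Z g ω ≤ K} := by
        intro ω hω
        push_neg at hω
        obtain ⟨K, hK⟩ := hω
        exact Set.mem_iUnion.2 ⟨K, hK⟩
      exact measure_mono_null hsub (measure_iUnion_null fun K => EZ_null B h1 K)
    have hsub : Gdᶜ ⊆ {ω | ¬ ∀ g, B.Z g ω = W B g ω} ∪
        {ω | ¬ ∀ K : ℕ, ¬ ∀ g, 0 < B.Z g ω ∧ B.Z g ω ≤ K} := by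
      intro ω hω
      simp only [hGd, Set.mem_compl_iff, Set.mem_setOf_eq, not_and_or] at hω
      exact hω
    refine measure_mono_null hsub ?_
    refine le_antisymm (le_trans (measure_union_le _ _) ?_) zero_le
    rw [h1', h2', add_zero]
  -- on the good set, surviving trajectories are unbounded
  have hunbdd : ∀ ω ∈ Gd, ω ∈ Sv → ∀ K : ℕ, ∃ g, K < B.Z g ω := by
    intro ω hω hS K
    have := hω.2 K
    push_neg at this
    obtain ⟨g, hg⟩ := this
    exact ⟨g, by have := hS g; omega⟩
  -- on the good set, extinct trajectories have bounded total size
  have hbddtot : ∀ ω ∈ Gd, ω ∉ Sv →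
      ∃ c : ℕ, ∀ g : ℕ, (∑ i ∈ Finset.range (g + 1), B.Z i ω) ≤ c := by
    intro ω hω hS
    simp only [hSv, Set.mem_setOf_eq, not_forall] at hS
    obtain ⟨g₀, hg₀⟩ := hS
    have hZ0 : B.Z g₀ ω = 0 := by omega
    have habs : ∀ d, B.Z (g₀ + d) ω = 0 := by
      intro d
      rw [hω.1 (g₀ + d)]
      exact W_zero_add B (by rw [← hω.1 g₀]; exact hZ0) d
    refine ⟨∑ i ∈ Finset.range (g₀ + 1), B.Z i ω, fun g => ?_⟩
    rcases le_or_gt g g₀ with h | h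
    · exact Finset.sum_le_sum_of_subset (Finset.range_subset_range.2 (by omega))
    · refine le_of_eq ?_
      refine (Finset.sum_subset (Finset.range_subset_range.2 (by omega)) ?_).symm
      intro i hi hni
      simp only [Finset.mem_range] at hi hni
      have : i = g₀ + (i - g₀) := by omega
      rw [this]
      exact habs _
  -- the decreasing family of total-size threshold events
  set Abar : ℕ → Set Ω := fun m =>
    {ω | ∃ g : ℕ, (m : ℝ) ≤ ((∑ i ∈ Finset.range (g + 1), B.Z i ω : ℕ) : ℝ)} with hAbar
  have hmeasAbar : ∀ m, MeasurableSet (Abar m) := by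
    intro m
    have : Abar m = ⋃ g : ℕ,
        (fun ω => ∑ i ∈ Finset.range (g + 1), B.Z i ω) ⁻¹' {n : ℕ | (m : ℝ) ≤ (n : ℝ)} := by
      ext ω
      simp only [hAbar, Set.mem_setOf_eq, Set.mem_iUnion, Set.mem_preimage]
    rw [this]
    exact MeasurableSet.iUnion fun g =>
      (Finset.measurable_sum _ fun i _ => B.measZ i) trivial
  have hAnti : Antitone Abar := by
    intro m m' hmm ω hω
    obtain ⟨g, hg⟩ := hω
    exact ⟨g, le_trans (by exact_mod_cast Nat.cast_le.2 hmm) hg⟩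
  -- the intersection is a.e. the survival event
  have hiInter : P (⋂ m : ℕ, Abar m) = P Sv := by
    refine measure_congr ?_
    rw [Filter.eventuallyEq_set]
    have hGdae : ∀ᵐ ω ∂P, ω ∈ Gd := by
      rw [← compl_compl Gd] at *
      exact (ae_iff.2 (by simp only [compl_compl] at hGdnull ⊢; exact hGdnull))
    filter_upwards [hGdae] with ω hωGd
    constructor
    · intro hω
      by_contra hS
      obtain ⟨c, hc⟩ := hbddtot ω hωGd hS
      have := Set.mem_iInter.1 hω (c + 1)
      obtain ⟨g, hg⟩ := this
      have hle : ((∑ i ∈ Finset.range (g + 1), B.Z i ω : ℕ) : ℝ) ≤ (c : ℝ) :=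
        Nat.cast_le.2 (hc g)
      have : ((c + 1 : ℕ) : ℝ) = (c : ℝ) + 1 := by push_cast; ring
      rw [this] at hg
      linarith
    · intro hS
      refine Set.mem_iInter.2 fun m => ⟨m, ?_⟩
      have hsum : m + 1 ≤ ∑ i ∈ Finset.range (m + 1), B.Z i ω := by
        have hcard : (Finset.range (m + 1)).card • 1
            ≤ ∑ i ∈ Finset.range (m + 1), B.Z i ω :=
          Finset.card_nsmul_le_sum _ _ 1 fun i _ => hS i
        simpa using hcard
      exact_mod_cast Nat.cast_le.2 (by omega : m ≤ ∑ i ∈ Finset.range (m + 1), B.Z i ω)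
  -- continuity from above
  have htend1 : Tendsto (fun m => P (Abar m)) atTop (nhds (P Sv)) := by
    have := tendsto_measure_iInter_atTop (μ := P)
      (fun m => (hmeasAbar m).nullMeasurableSet) hAnti ⟨0, measure_ne_top P _⟩
    rwa [hiInter] at this
  have htendReal : Tendsto (fun m => (P (Abar m)).toReal) atTop
      (nhds (P Sv).toReal) :=
    (ENNReal.tendsto_toReal (measure_ne_top P _)).comp htend1
  have hfloor : Tendsto (fun N => ⌊b N⌋₊) atTop atTop :=
    tendsto_nat_floor_atTop.comp hb
  have hh : Tendsto (fun N => (P (Abar ⌊b N⌋₊)).toReal) atTop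
      (nhds (P Sv).toReal) := htendReal.comp hfloor
  -- lower bound: survival implies reaching any level
  have hlowZ : ∀ x : ℝ, P Sv ≤ P {ω | ∃ g : ℕ, x ≤ ((B.Z g ω : ℕ) : ℝ)} := by
    intro x
    have hsub : Sv ⊆ {ω | ∃ g : ℕ, x ≤ ((B.Z g ω : ℕ) : ℝ)} ∪ Gdᶜ := by
      intro ω hω
      by_cases hωGd : ω ∈ Gd
      · obtain ⟨g, hg⟩ := hunbdd ω hωGd hω ⌈x⌉₊
        refine Or.inl ⟨g, ?_⟩
        calc x ≤ (⌈x⌉₊ : ℝ) := Nat.le_ceil x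
          _ ≤ ((B.Z g ω : ℕ) : ℝ) := Nat.cast_le.2 (by omega)
      · exact Or.inr hωGd
    calc P Sv ≤ P ({ω | ∃ g : ℕ, x ≤ ((B.Z g ω : ℕ) : ℝ)} ∪ Gdᶜ) := measure_mono hsub
      _ ≤ P {ω | ∃ g : ℕ, x ≤ ((B.Z g ω : ℕ) : ℝ)} + P Gdᶜ := measure_union_le _ _
      _ = P {ω | ∃ g : ℕ, x ≤ ((B.Z g ω : ℕ) : ℝ)} := by rw [hGdnull, add_zero]
  -- the single-generation event is contained in the total-size event
  have hZsubT : ∀ x : ℝ, {ω | ∃ g : ℕ, x ≤ ((B.Z g ω : ℕ) : ℝ)} ⊆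
      {ω | ∃ g : ℕ, x ≤ ((∑ i ∈ Finset.range (g + 1), B.Z i ω : ℕ) : ℝ)} := by
    intro x ω hω
    obtain ⟨g, hg⟩ := hω
    refine ⟨g, le_trans hg (Nat.cast_le.2 ?_)⟩
    exact Finset.single_le_sum (f := fun i => B.Z i ω) (fun i _ => Nat.zero_le _)
      (Finset.self_mem_range_succ g)
  -- the total-size event is eventually contained in `Abar ⌊b N⌋₊`
  have hTsubA : ∀ N, 0 ≤ b N →
      {ω | ∃ g : ℕ, b N ≤ ((∑ i ∈ Finset.range (g + 1), B.Z i ω : ℕ) : ℝ)} ⊆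
        Abar ⌊b N⌋₊ := by
    intro N h0 ω hω
    obtain ⟨g, hg⟩ := hω
    exact ⟨g, le_trans (Nat.floor_le h0) hg⟩
  have hb0 : ∀ᶠ N in atTop, 0 ≤ b N := hb.eventually_ge_atTop 0
  have hlowT : ∀ N, (P Sv).toReal ≤
      (P {ω | ∃ g : ℕ, b N ≤
        ((∑ i ∈ Finset.range (g + 1), B.Z i ω : ℕ) : ℝ)}).toReal := by
    intro N
    exact ENNReal.toReal_mono (measure_ne_top P _)
      (le_trans (hlowZ (b N)) (measure_mono (hZsubT (b N))))
  have hupT : ∀ᶠ N in atTop,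
      (P {ω | ∃ g : ℕ, b N ≤
        ((∑ i ∈ Finset.range (g + 1), B.Z i ω : ℕ) : ℝ)}).toReal ≤
      (P (Abar ⌊b N⌋₊)).toReal := by
    filter_upwards [hb0] with N h0
    exact ENNReal.toReal_mono (measure_ne_top P _) (measure_mono (hTsubA N h0))
  constructor
  · exact tendsto_of_tendsto_of_tendsto_of_le_of_le' tendsto_const_nhds hh
      (Filter.Eventually.of_forall hlowT) hupT
  · refine tendsto_of_tendsto_of_tendsto_of_le_of_le' tendsto_const_nhds hh
      (Filter.Eventually.of_forall fun N =>
        ENNReal.toReal_mono (measure_ne_top P _) (hlowZ (b N))) ?_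
    filter_upwards [hb0] with N h0
    refine ENNReal.toReal_mono (measure_ne_top P _) (measure_mono ?_)
    exact le_trans (hZsubT (b N)) (hTsubA N h0)
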